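/- arXiv:1807.02563 — 8 statements merged into one kernel-verified Lean document; each statement's English description precedes it below -/
import Mathlib

section
/- Local invariance of the low-order update: let B ⊆ ℝ^m be a convex set and fix i ∈ V. Assume (a) U_j^n ∈ B for all j ∈ V; (b) Ū_ij ∈ B for all j ≠ i; (c) U_i^n + 2τ S(U_i^n) ∈ B; (d) 1 + 4τ d_ii/m_i ≥ 0. Then U_i^{L,n+1} ∈ B. -/
open Finset

/-- Local invariance of the low-order update. -/
theorem low_order_local_invariance
    (m d : ℕ) (hm : 1 ≤ m) (hd : 1 ≤ d)
    (V : Type) [Fintype V] [DecidableEq V]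
    (M : V → ℝ) (hM : ∀ i, 0 < M i)
    (c : V → V → Fin d → ℝ)
    (hcskew : ∀ i j, c i j = - c j i)
    (hcsum : ∀ i, ∑ j, c i j = 0)
    (f : (Fin m → ℝ) → Matrix (Fin m) (Fin d) ℝ)
    (S : (Fin m → ℝ) → (Fin m → ℝ))
    (dL : V → V → ℝ)
    (hdsym : ∀ i j, i ≠ j → dL i j = dL j i)
    (hdpos : ∀ i j, i ≠ j → 0 < dL i j)
    (U UL : V → Fin m → ℝ)
    (τ : ℝ) (hτ : 0 < τ)
    (hscheme : ∀ i, (M i / τ) • (UL i - U i) + ∑ j, (f (U j)).mulVec (c i j)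
        - ∑ j ∈ univ.erase i, dL i j • (U j - U i) = M i • S (U i))
    (B : Set (Fin m → ℝ)) (hB : Convex ℝ B)
    (i : V)
    (hU : ∀ j, U j ∈ B)
    (hbar : ∀ j ∈ univ.erase i,
      (1/2 : ℝ) • (U i + U j)
        - (1 / (2 * dL i j)) • ((f (U j) - f (U i)).mulVec (c i j)) ∈ B)
    (hsrc : U i + (2 * τ) • S (U i) ∈ B)
    (hCFL : 0 ≤ 1 + 4 * τ * (-(∑ j ∈ univ.erase i, dL i j)) / M i) :
    UL i ∈ B := by
  classical
  obtain ⟨b, hbdef⟩ : ∃ b : V → (Fin m → ℝ), ∀ j, b j =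
      (1/2 : ℝ) • (U i + U j)
        - (1 / (2 * dL i j)) • ((f (U j) - f (U i)).mulVec (c i j)) :=
    ⟨_, fun j => rfl⟩
  obtain ⟨lam, hlamdef⟩ : ∃ lam : V → ℝ, ∀ j, lam j = 4 * τ * dL i j / M i :=
    ⟨_, fun j => rfl⟩
  have hMne : M i ≠ 0 := ne_of_gt (hM i)
  have hτne : τ ≠ 0 := ne_of_gt hτ
  have hbarb : ∀ j ∈ univ.erase i, b j ∈ B := by
    intro j hj; rw [hbdef]; exact hbar j hj
  -- c i i = 0
  have hcii : c i i = 0 := by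
    have h := hcskew i i
    funext k
    have hk := congrFun h k
    simp only [Pi.neg_apply] at hk
    have : c i i k = 0 := by linarith
    simpa using this
  -- sum of c over erase i is 0
  have hcK : ∑ j ∈ univ.erase i, c i j = 0 := by
    have h := Finset.add_sum_erase univ (fun j => c i j) (mem_univ i)
    simp only [hcii, zero_add, hcsum i] at h
    exact h
  -- flux sum rewrite
  have hfi : ∑ j ∈ univ.erase i, (f (U i)).mulVec (c i j) = 0 := by
    rw [← Matrix.mulVec_sum, hcK, Matrix.mulVec_zero]
  have hflux : ∑ j, (f (U j)).mulVec (c i j)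
      = ∑ j ∈ univ.erase i, ((f (U j)) - f (U i)).mulVec (c i j) := by
    rw [← Finset.add_sum_erase univ (fun j => (f (U j)).mulVec (c i j)) (mem_univ i)]
    simp [hcii, Matrix.sub_mulVec, Finset.sum_sub_distrib, hfi]
  -- per-term identity
  have hterm : ∀ j ∈ univ.erase i,
      dL i j • (U j - U i) - ((f (U j)) - f (U i)).mulVec (c i j)
        = (2 * dL i j) • (b j - U i) := by
    intro j hj
    have hjne : j ≠ i := Finset.ne_of_mem_erase hj
    have hd0 : (0:ℝ) < dL i j := hdpos i j (fun h => hjne h.symm)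
    have hdne : dL i j ≠ 0 := ne_of_gt hd0
    rw [hbdef]
    match_scalars <;> field_simp <;> ring
  -- rearrange the scheme
  have h1 : (M i / τ) • (UL i - U i)
      = M i • S (U i) + ∑ j ∈ univ.erase i, dL i j • (U j - U i)
        - ∑ j, (f (U j)).mulVec (c i j) := by
    have h := hscheme i
    linear_combination (norm := module) h
  have h2 : UL i = U i + (τ / M i) • (M i • S (U i)
      + (∑ j ∈ univ.erase i, dL i j • (U j - U i) - ∑ j, (f (U j)).mulVec (c i j))) := by
    rw [← add_sub_assoc, ← h1, smul_smul]
    have hone : τ / M i * (M i / τ) = 1 := by field_simp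
    rw [hone, one_smul]
    abel
  have h3 : ∑ j ∈ univ.erase i, dL i j • (U j - U i) - ∑ j, (f (U j)).mulVec (c i j)
      = ∑ j ∈ univ.erase i, (2 * dL i j) • (b j - U i) := by
    rw [hflux, ← Finset.sum_sub_distrib]
    exact Finset.sum_congr rfl hterm
  have h4 : (τ / M i) • ∑ j ∈ univ.erase i, (2 * dL i j) • (b j - U i)
      = (1/2 : ℝ) • ∑ j ∈ univ.erase i, lam j • (b j - U i) := by
    rw [Finset.smul_sum, Finset.smul_sum]
    refine Finset.sum_congr rfl fun j hj => ?_
    rw [smul_smul, smul_smul, hlamdef]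
    congr 1
    field_simp
    ring
  have hkey : UL i = U i + τ • S (U i)
      + (1/2 : ℝ) • ∑ j ∈ univ.erase i, lam j • (b j - U i) := by
    rw [h2, smul_add, h3, h4, smul_smul]
    have hts : τ / M i * M i = τ := by field_simp
    rw [hts]
    abel
  have hsplit : ∑ j ∈ univ.erase i, lam j • (b j - U i)
      = (∑ j ∈ univ.erase i, lam j • b j) - (∑ j ∈ univ.erase i, lam j) • U i := by
    rw [Finset.sum_smul, ← Finset.sum_sub_distrib]
    exact Finset.sum_congr rfl fun j _ => smul_sub _ _ _
  -- weight bounds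
  have hlamnn : ∀ j ∈ univ.erase i, 0 ≤ lam j := by
    intro j hj
    have hjne : j ≠ i := Finset.ne_of_mem_erase hj
    have hd0 : (0:ℝ) < dL i j := hdpos i j (fun h => hjne h.symm)
    rw [hlamdef]
    exact div_nonneg (by nlinarith [mul_pos hτ hd0]) (le_of_lt (hM i))
  have hsumlam : ∑ j ∈ univ.erase i, lam j
      = 4 * τ * (∑ j ∈ univ.erase i, dL i j) / M i := by
    rw [Finset.mul_sum, Finset.sum_div]
    exact Finset.sum_congr rfl fun j _ => hlamdef j
  have hsum_le : ∑ j ∈ univ.erase i, lam j ≤ 1 := by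
    rw [hsumlam]
    have h : 4 * τ * (-(∑ j ∈ univ.erase i, dL i j)) / M i
        = -(4 * τ * (∑ j ∈ univ.erase i, dL i j) / M i) := by ring
    rw [h] at hCFL
    linarith
  -- convex combination y
  have hy : (1 - ∑ j ∈ univ.erase i, lam j) • U i
      + ∑ j ∈ univ.erase i, lam j • b j ∈ B := by
    have hw : ∀ j ∈ (univ : Finset V),
        0 ≤ (if j = i then 1 - ∑ j ∈ univ.erase i, lam j else lam j) := by
      intro j _
      by_cases h : j = i
      · rw [if_pos h]; linarith
      · rw [if_neg h]
        exact hlamnn j (Finset.mem_erase.mpr ⟨h, mem_univ j⟩)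
    have hw1 : ∑ j, (if j = i then 1 - ∑ j ∈ univ.erase i, lam j else lam j) = 1 := by
      rw [← Finset.add_sum_erase univ _ (mem_univ i), if_pos rfl,
        Finset.sum_congr rfl (fun j hj => if_neg (Finset.ne_of_mem_erase hj))]
      ring
    have hmem : ∀ j ∈ (univ : Finset V), (if j = i then U i else b j) ∈ B := by
      intro j _
      by_cases h : j = i
      · rw [if_pos h]; exact hU i
      · rw [if_neg h]
        exact hbarb j (Finset.mem_erase.mpr ⟨h, mem_univ j⟩)
    have hc := hB.sum_mem hw hw1 hmem
    rw [← Finset.add_sum_erase univ _ (mem_univ i), if_pos rfl, if_pos rfl] at hc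
    have heq : ∑ x ∈ univ.erase i,
        (if x = i then (1 - ∑ j ∈ univ.erase i, lam j) else lam x)
          • (if x = i then U i else b x)
        = ∑ j ∈ univ.erase i, lam j • b j :=
      Finset.sum_congr rfl fun j hj => by
        rw [if_neg (Finset.ne_of_mem_erase hj), if_neg (Finset.ne_of_mem_erase hj)]
    rw [heq] at hc
    exact hc
  have hfinal : UL i = (1/2 : ℝ) • (U i + (2 * τ) • S (U i))
      + (1/2 : ℝ) • ((1 - ∑ j ∈ univ.erase i, lam j) • U i
        + ∑ j ∈ univ.erase i, lam j • b j) := by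
    rw [hkey, hsplit]
    generalize (∑ j ∈ univ.erase i, lam j • b j) = A
    generalize (∑ j ∈ univ.erase i, lam j) = s
    module
  rw [hfinal]
  exact hB hsrc hy (by norm_num) (by norm_num) (by norm_num)
end

section
/- Global invariance of the low-order update: let B ⊆ ℝ^m be a convex set. Assume (a) U_j^n ∈ B for all j ∈ V; (b) Ū_ij ∈ B for all i ∈ V and all j ≠ i; (c) U_i^n + 2τ S(U_i^n) ∈ B for all i ∈ V; (d) min_{i∈V} (1 + 4τ d_ii/m_i) ≥ 0. Then U_i^{L,n+1} ∈ B for every i ∈ V. -/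
open Finset

/-- Global invariance of the low-order update. -/
theorem low_order_global_invariance
    (m d : ℕ) (hm : 1 ≤ m) (hd : 1 ≤ d)
    (V : Type) [Fintype V] [DecidableEq V]
    (M : V → ℝ) (hM : ∀ i, 0 < M i)
    (c : V → V → Fin d → ℝ)
    (hcskew : ∀ i j, c i j = - c j i)
    (hcsum : ∀ i, ∑ j, c i j = 0)
    (f : (Fin m → ℝ) → Matrix (Fin m) (Fin d) ℝ)
    (S : (Fin m → ℝ) → (Fin m → ℝ))
    (dL : V → V → ℝ)
    (hdsym : ∀ i j, i ≠ j → dL i j = dL j i)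
    (hdpos : ∀ i j, i ≠ j → 0 < dL i j)
    (U UL : V → Fin m → ℝ)
    (τ : ℝ) (hτ : 0 < τ)
    (hscheme : ∀ i, (M i / τ) • (UL i - U i) + ∑ j, (f (U j)).mulVec (c i j)
        - ∑ j ∈ univ.erase i, dL i j • (U j - U i) = M i • S (U i))
    (B : Set (Fin m → ℝ)) (hB : Convex ℝ B)
    (hU : ∀ j, U j ∈ B)
    (hbar : ∀ i, ∀ j ∈ univ.erase i,
      (1/2 : ℝ) • (U i + U j)
        - (1 / (2 * dL i j)) • ((f (U j) - f (U i)).mulVec (c i j)) ∈ B)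
    (hsrc : ∀ i, U i + (2 * τ) • S (U i) ∈ B)
    (hCFL : ∀ i, 0 ≤ 1 + 4 * τ * (-(∑ j ∈ univ.erase i, dL i j)) / M i) :
    ∀ i, UL i ∈ B := by
  intro i
  have hMi : (0:ℝ) < M i := hM i
  have hMne : M i ≠ 0 := ne_of_gt hMi
  have hτne : τ ≠ 0 := ne_of_gt hτ
  have hcii : c i i = 0 := by
    funext t
    have := congrFun (hcskew i i) t
    simp only [Pi.neg_apply] at this
    simp only [Pi.zero_apply]
    linarith
  set A : ℝ := ∑ j ∈ univ.erase i, dL i j with hA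
  have hCFL' : 0 ≤ 1 - 4*τ*A/(M i) := by
    have h := hCFL i
    have : 4 * τ * (-A) / M i = -(4*τ*A/(M i)) := by ring
    rw [this] at h
    linarith
  set w : V → ℝ := fun j => if j = i then 1 - 4*τ*A/(M i) else 4*τ*dL i j/(M i) with hw
  set z : V → (Fin m → ℝ) := fun j => if j = i then U i else
      (1/2 : ℝ) • (U i + U j) - (1/(2*dL i j)) • ((f (U j) - f (U i)).mulVec (c i j)) with hz
  -- weights are nonnegative
  have hwnn : ∀ j ∈ (univ : Finset V), 0 ≤ w j := by
    intro j _
    by_cases hji : j = i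
    · simp [hw, hji, hCFL']
    · have hd' : 0 < dL i j := hdpos i j (fun h => hji h.symm)
      simp only [hw, if_neg hji]
      positivity
  -- weights sum to one
  have hw1 : ∑ j, w j = 1 := by
    rw [← Finset.add_sum_erase _ w (mem_univ i)]
    have h1 : ∑ j ∈ univ.erase i, w j = ∑ j ∈ univ.erase i, 4*τ*dL i j/(M i) := by
      apply Finset.sum_congr rfl
      intro j hj
      simp [hw, (Finset.mem_erase.mp hj).1]
    rw [h1]
    have h2 : ∑ j ∈ univ.erase i, 4*τ*dL i j/(M i) = 4*τ*A/(M i) := by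
      rw [hA, Finset.mul_sum, Finset.sum_div]
    rw [h2]
    simp [hw]
  -- points are in B
  have hzB : ∀ j ∈ (univ : Finset V), z j ∈ B := by
    intro j _
    by_cases hji : j = i
    · simp only [hz, if_pos hji]; exact hU i
    · simp only [hz, if_neg hji]
      exact hbar i j (Finset.mem_erase.mpr ⟨hji, mem_univ j⟩)
  have hmem : ∑ j, w j • z j ∈ B := hB.sum_mem hwnn hw1 hzB
  -- the key algebraic identity
  have hfinal : UL i = (1/2 : ℝ) • (U i + (2*τ) • S (U i)) + (1/2 : ℝ) • ∑ j, w j • z j := by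
    have hs := hscheme i
    funext k
    have hsk := congrFun hs k
    simp only [Pi.add_apply, Pi.sub_apply, Pi.smul_apply, Finset.sum_apply, smul_eq_mul] at hsk ⊢
    -- rewrite the flux sum using ∑ c i j = 0 and c i i = 0
    have hF : ∑ j, ((f (U j)).mulVec (c i j)) k
        = ∑ j ∈ univ.erase i, (((f (U j)).mulVec (c i j)) k - ((f (U i)).mulVec (c i j)) k) := by
      have hzero : ∑ j ∈ univ.erase i, ((f (U i)).mulVec (c i j)) k = 0 := by
        have hsum : ∑ j ∈ univ.erase i, c i j = 0 := by
          have := hcsum i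
          rw [← Finset.add_sum_erase _ (c i) (mem_univ i), hcii, zero_add] at this
          exact this
        have : ∑ j ∈ univ.erase i, ((f (U i)).mulVec (c i j))
            = (f (U i)).mulVec (∑ j ∈ univ.erase i, c i j) := by
          simp only [← Matrix.mulVecLin_apply]
          rw [map_sum]
        rw [← Finset.sum_apply, this, hsum]
        simp [Matrix.mulVec_zero]
      rw [← Finset.add_sum_erase _ (fun j => ((f (U j)).mulVec (c i j)) k) (mem_univ i)]
      simp only [hcii, Matrix.mulVec_zero, Pi.zero_apply, zero_add]
      rw [Finset.sum_sub_distrib, hzero, sub_zero]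
    rw [hF] at hsk
    -- split off the i-term in the convex combination sum
    rw [← Finset.add_sum_erase _ (fun j => w j * z j k) (mem_univ i)]
    have hzi : z i k = U i k := by simp [hz]
    have hwi : w i = 1 - 4*τ*A/(M i) := by simp [hw]
    have hRS : ∑ j ∈ univ.erase i, w j * z j k
        = ∑ j ∈ univ.erase i, ((2*τ*dL i j/(M i)) * (U i k + U j k)
            - (2*τ/(M i)) * (((f (U j)).mulVec (c i j)) k - ((f (U i)).mulVec (c i j)) k)) := by
      apply Finset.sum_congr rfl
      intro j hj
      have hji : j ≠ i := (Finset.mem_erase.mp hj).1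
      have hdj : dL i j ≠ 0 := ne_of_gt (hdpos i j (fun h => hji h.symm))
      simp only [hw, hz, if_neg hji, Pi.sub_apply, Pi.smul_apply, Pi.add_apply, smul_eq_mul,
        Matrix.sub_mulVec]
      field_simp
      ring
    rw [hRS]
    -- reduce the sums to scalar quantities
    set Sg : ℝ := ∑ j ∈ univ.erase i,
        (((f (U j)).mulVec (c i j)) k - ((f (U i)).mulVec (c i j)) k) with hSg
    set SU : ℝ := ∑ j ∈ univ.erase i, dL i j * U j k with hSU
    have hD : ∑ j ∈ univ.erase i, dL i j * (U j k - U i k) = SU - A * U i k := by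
      rw [hSU, hA, Finset.sum_mul, ← Finset.sum_sub_distrib]
      apply Finset.sum_congr rfl
      intro j _
      ring
    have hT : ∑ j ∈ univ.erase i, ((2*τ*dL i j/(M i)) * (U i k + U j k)
            - (2*τ/(M i)) * (((f (U j)).mulVec (c i j)) k - ((f (U i)).mulVec (c i j)) k))
        = (2*τ/(M i)) * (A * U i k) + (2*τ/(M i)) * SU - (2*τ/(M i)) * Sg := by
      rw [hSU, hSg, hA]
      simp only [Finset.mul_sum, Finset.sum_mul, ← Finset.sum_add_distrib, ← Finset.sum_sub_distrib]
      apply Finset.sum_congr rfl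
      intro j _
      ring
    rw [hD] at hsk
    rw [hT, hzi, hwi]
    have hsk' : UL i k = U i k + (τ/(M i)) * (M i * S (U i) k - Sg + (SU - A * U i k)) := by
      field_simp at hsk ⊢
      linarith
    rw [hsk']
    field_simp
    ring
  rw [hfinal]
  exact hB (hsrc i) hmem (by norm_num) (by norm_num) (by norm_num)
end

section
/- Discrete entropy inequality: let η : ℝ^m → ℝ be convex and differentiable with gradient ∇η, and let q : ℝ^m → ℝ^d. Fix i ∈ V and assume (a) for every j ≠ i, η(Ū_ij) ≤ ½(η(U_i^n) + η(U_j^n)) − (1/(2 d_ij)) (q(U_j^n) − q(U_i^n))·c_ij; (b) 1 + 2τ d_ii/m_i ≥ 0. Then (m_i/τ)(η(U_i^{L,n+1}) − η(U_i^n)) + ∑_{j∈V} q(U_j^n)·c_ij − ∑_{j≠i} d_ij (η(U_j^n) − η(U_i^n)) ≤ m_i S(U_i^n)·∇η(U_i^{L,n+1}). -/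
open Finset

lemma convex_tangent_le {E : Type*} [NormedAddCommGroup E] [NormedSpace ℝ E]
    {f : E → ℝ} (hf : ConvexOn ℝ Set.univ f) {f' : E →L[ℝ] ℝ} {x : E}
    (hd : HasFDerivAt f f' x) (y : E) : f x + f' (y - x) ≤ f y := by
  set L : ℝ →ᵃ[ℝ] E := AffineMap.lineMap x y with hL
  have hg : ConvexOn ℝ Set.univ (f ∘ L) := by
    have := hf.comp_affineMap L
    simpa using this
  have hc : HasDerivAt (fun t : ℝ => L t) (y - x) 0 := by
    have : HasDerivAt (fun t : ℝ => x + t • (y - x)) (y - x) 0 := by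
      simpa using ((hasDerivAt_id (0:ℝ)).smul_const (y - x)).const_add x
    simpa [hL, AffineMap.lineMap_apply, vsub_eq_sub, vadd_eq_add, add_comm] using this
  have hgd : HasDerivAt (f ∘ L) (f' (y - x)) 0 := by
    have h0 : L (0:ℝ) = x := by simp [hL]
    have := (h0 ▸ hd).comp_hasDerivAt (0:ℝ) hc
    simpa using this
  have hslope := hg.le_slope_of_hasDerivAt (Set.mem_univ (0:ℝ)) (Set.mem_univ (1:ℝ))
    one_pos hgd
  have h0 : (f ∘ L) 0 = f x := by simp [hL]
  have h1 : (f ∘ L) 1 = f y := by simp [hL]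
  rw [slope_def_field, h0, h1] at hslope
  simp at hslope
  have hms : f' (y - x) = f' y - f' x := map_sub f' y x
  linarith

/-- Discrete entropy inequality for the low-order scheme. -/
theorem low_order_entropy_inequality
    (m d : ℕ) (hm : 1 ≤ m) (hd : 1 ≤ d)
    (V : Type) [Fintype V] [DecidableEq V]
    (M : V → ℝ) (hM : ∀ i, 0 < M i)
    (c : V → V → Fin d → ℝ)
    (hcskew : ∀ i j, c i j = - c j i)
    (hcsum : ∀ i, ∑ j, c i j = 0)
    (f : (Fin m → ℝ) → Matrix (Fin m) (Fin d) ℝ)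
    (S : (Fin m → ℝ) → (Fin m → ℝ))
    (dL : V → V → ℝ)
    (hdsym : ∀ i j, i ≠ j → dL i j = dL j i)
    (hdpos : ∀ i j, i ≠ j → 0 < dL i j)
    (U UL : V → Fin m → ℝ)
    (τ : ℝ) (hτ : 0 < τ)
    (hscheme : ∀ i, (M i / τ) • (UL i - U i) + ∑ j, (f (U j)).mulVec (c i j)
        - ∑ j ∈ univ.erase i, dL i j • (U j - U i) = M i • S (U i))
    (η : (Fin m → ℝ) → ℝ) (q : (Fin m → ℝ) → Fin d → ℝ)
    (hηconv : ConvexOn ℝ Set.univ η)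
    (Dη : (Fin m → ℝ) → (Fin m → ℝ))
    (hηgrad : ∀ u, HasFDerivAt η
      (∑ k, Dη u k • (ContinuousLinearMap.proj k : (Fin m → ℝ) →L[ℝ] ℝ)) u)
    (i : V)
    (hbarentropy : ∀ j ∈ univ.erase i,
      η ((1/2 : ℝ) • (U i + U j)
          - (1 / (2 * dL i j)) • ((f (U j) - f (U i)).mulVec (c i j)))
        ≤ (1/2) * (η (U i) + η (U j))
          - (1 / (2 * dL i j)) * ∑ k, (q (U j) k - q (U i) k) * c i j k)
    (hCFL : 0 ≤ 1 + 2 * τ * (-(∑ j ∈ univ.erase i, dL i j)) / M i) :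
    (M i / τ) * (η (UL i) - η (U i))
      + ∑ j, (∑ k, q (U j) k * c i j k)
      - ∑ j ∈ univ.erase i, dL i j * (η (U j) - η (U i))
      ≤ M i * ∑ k, S (U i) k * Dη (UL i) k := by
  classical
  have hMi := hM i
  have hMne : M i ≠ 0 := hMi.ne'
  have hτne : τ ≠ 0 := hτ.ne'
  set t : Finset V := univ.erase i with htdef
  set A : ℝ := ∑ j ∈ t, dL i j with hA
  -- c i i = 0
  have hcii : c i i = 0 := by
    funext k
    have h' : c i i k = -(c i i k) := by simpa using congrFun (hcskew i i) k
    simp only [Pi.zero_apply]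
    linarith
  -- sum of c over t is 0
  have hct : ∑ j ∈ t, c i j = 0 := by
    have h : ∑ j ∈ t, c i j = ∑ j, c i j := by
      refine Finset.sum_subset (Finset.erase_subset i univ) ?_
      intro j _ hj
      have hji : j = i := by
        by_contra hne
        exact hj (Finset.mem_erase.2 ⟨hne, Finset.mem_univ j⟩)
      subst hji
      exact hcii
    rw [h, hcsum i]
  -- flux sums
  set F : Fin m → ℝ := ∑ j, (f (U j)).mulVec (c i j) with hF
  have hz0 : ∑ j, (f (U i)).mulVec (c i j) = 0 := by
    have h := (map_sum ((f (U i)).mulVecLin) (fun j => c i j) univ).symm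
    simpa [Matrix.mulVecLin_apply, hcsum i] using h
  have hFt : F = ∑ j ∈ t, (f (U j) - f (U i)).mulVec (c i j) := by
    have h6 : ∑ j, (f (U j) - f (U i)).mulVec (c i j) = F := by
      rw [hF]
      simp only [Matrix.sub_mulVec]
      rw [Finset.sum_sub_distrib, hz0, sub_zero]
    rw [← h6]
    refine (Finset.sum_subset (Finset.erase_subset i univ) ?_).symm
    intro j _ hj
    have hji : j = i := by
      by_contra hne
      exact hj (Finset.mem_erase.2 ⟨hne, Finset.mem_univ j⟩)
    subst hji
    rw [hcii, Matrix.mulVec_zero]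
  set D : Fin m → ℝ := ∑ j ∈ t, dL i j • (U j - U i) with hD
  -- rearranged scheme
  have hs := hscheme i
  have h2 : (M i / τ) • (UL i - U i) = M i • S (U i) + D - F := by
    rw [← hs]; abel
  have hone : (τ / M i) * (M i / τ) = 1 := by field_simp
  have h3 : UL i - U i = (τ / M i) • (M i • S (U i) + D - F) := by
    rw [← h2, smul_smul, hone, one_smul]
  have hUL : UL i - τ • S (U i) = U i + (τ / M i) • (D - F) := by
    have h4 : UL i = U i + (τ / M i) • (M i • S (U i) + D - F) := by
      rw [← h3]; abel
    rw [h4]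
    match_scalars <;> field_simp <;> ring
  -- weights and points
  set w : V → ℝ := fun j => if j = i then 1 + 2 * τ * (-A) / M i else 2 * τ * dL i j / M i
    with hw
  set z : V → (Fin m → ℝ) := fun j => if j = i then U i else
      ((1/2 : ℝ) • (U i + U j) - (1 / (2 * dL i j)) • ((f (U j) - f (U i)).mulVec (c i j)))
    with hzdef
  have hwi : w i = 1 + 2 * τ * (-A) / M i := by simp [hw]
  have hzi : z i = U i := by simp [hzdef]
  have hw0 : ∀ j ∈ (univ : Finset V), 0 ≤ w j := by
    intro j _
    by_cases hji : j = i
    · rw [hji, hwi]; exact hCFL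
    · have hdij := hdpos i j (Ne.symm hji)
      simp only [hw, if_neg hji]
      positivity
  have hsumw : ∑ j ∈ t, w j = 2 * τ * A / M i := by
    have h7 : ∀ j ∈ t, w j = 2 * τ * dL i j / M i := fun j hj => by
      simp [hw, Finset.ne_of_mem_erase hj]
    rw [Finset.sum_congr rfl h7, hA, Finset.mul_sum, Finset.sum_div]
  have hw1 : ∑ j, w j = 1 := by
    rw [← Finset.sum_erase_add _ _ (mem_univ i), ← htdef, hsumw, hwi]
    field_simp
    ring
  -- sum of weighted bar states
  have hterm : ∀ j ∈ t, w j • z j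
      = (τ / M i) • (dL i j • (U j - U i) - (f (U j) - f (U i)).mulVec (c i j))
        + (w j) • U i := by
    intro j hj
    have hji : j ≠ i := Finset.ne_of_mem_erase hj
    have hdij := hdpos i j (Ne.symm hji)
    simp only [hw, hzdef, if_neg hji]
    match_scalars <;> field_simp <;> ring
  have hz : ∑ j, w j • z j = UL i - τ • S (U i) := by
    rw [← Finset.sum_erase_add _ _ (mem_univ i), ← htdef, hzi,
      Finset.sum_congr rfl hterm, Finset.sum_add_distrib, ← Finset.smul_sum,
      Finset.sum_sub_distrib, ← hD, ← hFt, ← Finset.sum_smul, hsumw, hUL, hwi]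
    match_scalars <;> field_simp <;> ring
  -- Jensen
  have hJ := hηconv.map_sum_le hw0 hw1 (fun j _ => Set.mem_univ (z j))
  rw [hz] at hJ
  -- entropy of bar states bound
  set Qf : V → ℝ := fun j => ∑ k, (q (U j) k - q (U i) k) * c i j k with hQf
  have hQb : ∑ j ∈ t, w j * η (z j)
      ≤ ∑ j ∈ t, (τ / M i) * (dL i j * (η (U i) + η (U j)) - Qf j) := by
    apply Finset.sum_le_sum
    intro j hj
    have hji : j ≠ i := Finset.ne_of_mem_erase hj
    have hdij := hdpos i j (Ne.symm hji)
    have hb := hbarentropy j hj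
    have hwnn : (0:ℝ) ≤ 2 * τ * dL i j / M i := by positivity
    simp only [hw, hzdef, if_neg hji]
    calc 2 * τ * dL i j / M i *
          η ((1/2 : ℝ) • (U i + U j)
            - (1 / (2 * dL i j)) • ((f (U j) - f (U i)).mulVec (c i j)))
        ≤ 2 * τ * dL i j / M i *
          ((1/2) * (η (U i) + η (U j)) - (1 / (2 * dL i j)) * Qf j) :=
          mul_le_mul_of_nonneg_left hb hwnn
      _ = (τ / M i) * (dL i j * (η (U i) + η (U j)) - Qf j) := by
          field_simp
  set P : ℝ := ∑ j ∈ t, dL i j * (η (U i) + η (U j)) with hP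
  set QQ : ℝ := ∑ j ∈ t, Qf j with hQQdef
  have hsum2 : ∑ j ∈ t, (τ / M i) * (dL i j * (η (U i) + η (U j)) - Qf j)
      = (τ / M i) * (P - QQ) := by
    rw [hP, hQQdef, ← Finset.sum_sub_distrib, Finset.mul_sum]
  -- split Jensen sum
  have hsplit : ∑ j, w j * η (z j) = ∑ j ∈ t, w j * η (z j) + w i * η (U i) := by
    rw [← Finset.sum_erase_add _ _ (mem_univ i), ← htdef, hzi]
  have hY : η (UL i - τ • S (U i)) ≤ (τ / M i) * (P - QQ) + w i * η (U i) := by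
    calc η (UL i - τ • S (U i)) ≤ ∑ j, w j * η (z j) := hJ
      _ = ∑ j ∈ t, w j * η (z j) + w i * η (U i) := hsplit
      _ ≤ (τ / M i) * (P - QQ) + w i * η (U i) := by
          rw [← hsum2]; exact add_le_add_left hQb _
  -- the flux entropy sum identity
  have hQQ : ∑ j, (∑ k, q (U j) k * c i j k) = QQ := by
    have hqi : ∀ j, Qf j = (∑ k, q (U j) k * c i j k) - ∑ k, q (U i) k * c i j k := by
      intro j
      rw [hQf]
      simp only
      rw [← Finset.sum_sub_distrib]
      exact Finset.sum_congr rfl fun k _ => by ring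
    have hq0 : ∑ j ∈ t, (∑ k, q (U i) k * c i j k) = 0 := by
      rw [Finset.sum_comm]
      apply Finset.sum_eq_zero
      intro k _
      rw [← Finset.mul_sum]
      have := congrFun hct k
      rw [Finset.sum_apply] at this
      simp only [Pi.zero_apply] at this
      rw [this, mul_zero]
    have h8 : QQ = ∑ j ∈ t, (∑ k, q (U j) k * c i j k) := by
      rw [hQQdef, Finset.sum_congr rfl fun j _ => hqi j, Finset.sum_sub_distrib, hq0,
        sub_zero]
    rw [h8, ← Finset.sum_erase_add _ _ (mem_univ i), ← htdef, hcii]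
    simp
  -- gradient step
  have hgrad := convex_tangent_le hηconv (hηgrad (UL i)) (UL i - τ • S (U i))
  have hLval : (∑ k, Dη (UL i) k • (ContinuousLinearMap.proj k : (Fin m → ℝ) →L[ℝ] ℝ))
      ((UL i - τ • S (U i)) - UL i) = -(τ * ∑ k, S (U i) k * Dη (UL i) k) := by
    rw [ContinuousLinearMap.sum_apply, Finset.mul_sum, ← Finset.sum_neg_distrib]
    apply Finset.sum_congr rfl
    intro k _
    simp only [ContinuousLinearMap.smul_apply, ContinuousLinearMap.proj_apply,
      Pi.sub_apply, Pi.smul_apply, smul_eq_mul]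
    ring
  rw [hLval] at hgrad
  -- final assembly
  set X := η (UL i) with hX
  set EI := η (U i) with hEI
  set G : ℝ := ∑ k, S (U i) k * Dη (UL i) k with hG
  have hXb : X ≤ (τ / M i) * (P - QQ) + w i * EI + τ * G := by linarith
  have hPsplit : P = A * EI + ∑ j ∈ t, dL i j * η (U j) := by
    rw [hP, hA, Finset.sum_mul, ← Finset.sum_add_distrib]
    exact Finset.sum_congr rfl fun j _ => by ring
  have hDterm : ∑ j ∈ t, dL i j * (η (U j) - EI) = (∑ j ∈ t, dL i j * η (U j)) - A * EI := by
    rw [hA, Finset.sum_mul, ← Finset.sum_sub_distrib]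
    exact Finset.sum_congr rfl fun j _ => by ring
  have hmul : (M i / τ) * (X - EI)
      ≤ (M i / τ) * ((τ / M i) * (P - QQ) + w i * EI + τ * G - EI) := by
    apply mul_le_mul_of_nonneg_left _ (le_of_lt (div_pos hMi hτ))
    linarith
  have hid : (M i / τ) * ((τ / M i) * (P - QQ) + w i * EI + τ * G - EI)
      = -(2 * A * EI) + (P - QQ) + M i * G := by
    rw [hwi]
    field_simp
    ring
  rw [hid] at hmul
  rw [hQQ]
  linarith
end

section
/- Natural bounds on the low-order update: let B ⊆ ℝ^m be a convex set and Ψ : B → ℝ be quasiconcave. Fix i ∈ V and assume (a) U_j^n ∈ B for all j ∈ V; (b) Ū_ij ∈ B for all j ≠ i; (c) U_i^n + 2τ S(U_i^n) ∈ B; (d) 1 + 4τ d_ii/m_i ≥ 0. Set Ψ_i^min := min( Ψ(U_i^n + 2τ S(U_i^n)), min_{j∈V} Ψ(Ū_ij) ). Then U_i^{L,n+1} ∈ B and Ψ(U_i^{L,n+1}) ≥ Ψ_i^min. -/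
open Finset

/-- Natural bounds on the low-order (GMS-GV) update: the low-order
update stays in the convex set `B` and satisfies `Ψ(U_i^{L,n+1}) ≥ Ψ_i^min`
for any quasiconcave functional `Ψ`. -/
theorem low_order_natural_bounds
    (m d : ℕ) (hm : 1 ≤ m) (hd : 1 ≤ d)
    (V : Type) [Fintype V] [DecidableEq V] [Nonempty V]
    (M : V → ℝ) (hM : ∀ i, 0 < M i)
    (c : V → V → Fin d → ℝ)
    (hcskew : ∀ i j, c i j = - c j i)
    (hcsum : ∀ i, ∑ j, c i j = 0)
    (f : (Fin m → ℝ) → Matrix (Fin m) (Fin d) ℝ)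
    (S : (Fin m → ℝ) → (Fin m → ℝ))
    (dL : V → V → ℝ)
    (hdsym : ∀ i j, i ≠ j → dL i j = dL j i)
    (hdpos : ∀ i j, i ≠ j → 0 < dL i j)
    (U UL : V → Fin m → ℝ)
    (τ : ℝ) (hτ : 0 < τ)
    (hscheme : ∀ i, (M i / τ) • (UL i - U i) + ∑ j, (f (U j)).mulVec (c i j)
        - ∑ j ∈ univ.erase i, dL i j • (U j - U i) = M i • S (U i))
    (Ubar : V → V → Fin m → ℝ)
    (hUbar : ∀ i j, i ≠ j → Ubar i j = (1/2 : ℝ) • (U i + U j)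
        - (1 / (2 * dL i j)) • ((f (U j) - f (U i)).mulVec (c i j)))
    (hUbarDiag : ∀ i, Ubar i i = U i)
    (B : Set (Fin m → ℝ)) (hB : Convex ℝ B)
    (Ψ : (Fin m → ℝ) → ℝ)
    (hΨ : ∀ χ : ℝ, Convex ℝ {W | W ∈ B ∧ χ ≤ Ψ W})
    (i : V)
    (hU : ∀ j, U j ∈ B)
    (hbar : ∀ j ∈ univ.erase i, Ubar i j ∈ B)
    (hsrc : U i + (2 * τ) • S (U i) ∈ B)
    (hCFL : 0 ≤ 1 + 4 * τ * (-(∑ j ∈ univ.erase i, dL i j)) / M i)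
    (Ψmin : ℝ)
    (hΨmin : Ψmin = min (Ψ (U i + (2 * τ) • S (U i)))
        (univ.inf' univ_nonempty (fun j => Ψ (Ubar i j)))) :
    UL i ∈ B ∧ Ψmin ≤ Ψ (UL i) := by
  classical
  have hM0 : M i ≠ 0 := (hM i).ne'
  have hτ0 : τ ≠ 0 := hτ.ne'
  -- notation
  set A := ∑ j, (f (U j)).mulVec (c i j) with hA
  set D := ∑ j ∈ univ.erase i, dL i j • (U j - U i) with hD
  set B1 := ∑ j ∈ univ.erase i, dL i j • Ubar i j with hB1
  set sig := ∑ j ∈ univ.erase i, dL i j with hsig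
  have hcii : c i i = 0 := by
    funext k
    have hk := congrFun (hcskew i i) k
    simp only [Pi.neg_apply] at hk
    have : (2 : ℝ) * c i i k = 0 := by linarith
    simpa using this
  have hcsumerase : ∑ j ∈ univ.erase i, c i j = 0 := by
    have h := hcsum i
    rw [← Finset.add_sum_erase univ (fun j => c i j) (mem_univ i)] at h
    simpa [hcii] using h
  have hAeq : A = ∑ j ∈ univ.erase i, (f (U j) - f (U i)).mulVec (c i j) := by
    have h2 : ∑ j ∈ univ.erase i, (f (U i)).mulVec (c i j) = 0 := by
      simp only [← Matrix.mulVecLin_apply, ← map_sum]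
      rw [hcsumerase]
      simp
    have h3 : A = ∑ j ∈ univ.erase i, (f (U j)).mulVec (c i j) := by
      rw [hA, ← Finset.add_sum_erase univ _ (mem_univ i), hcii]
      simp
    rw [h3]
    simp only [Matrix.sub_mulVec, Finset.sum_sub_distrib, h2, sub_zero]
  have hterm : ∀ j ∈ univ.erase i,
      dL i j • (U j - U i) - (f (U j) - f (U i)).mulVec (c i j)
        = (2 * dL i j) • Ubar i j - (2 * dL i j) • U i := by
    intro j hj
    have hji : j ≠ i := (Finset.mem_erase.mp hj).1
    have hdne : dL i j ≠ 0 := (hdpos i j hji.symm).ne'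
    rw [hUbar i j hji.symm]
    match_scalars <;> field_simp <;> ring
  have hkey : D - A = (2 : ℝ) • B1 - (2 * sig) • U i := by
    rw [hAeq, hD, ← Finset.sum_sub_distrib]
    rw [Finset.sum_congr rfl hterm]
    rw [Finset.sum_sub_distrib]
    congr 1
    · rw [hB1, Finset.smul_sum]
      exact Finset.sum_congr rfl fun j _ => by rw [smul_smul]
    · rw [← Finset.sum_smul, hsig, Finset.mul_sum]
  have hUL : UL i = U i + (τ / M i) • (M i • S (U i) - A + D) := by
    have h := hscheme i
    have h2 : (M i / τ) • (UL i - U i) = M i • S (U i) - A + D := by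
      linear_combination (norm := module) h
    have h3 := congrArg (fun v : Fin m → ℝ => (τ / M i) • v) h2
    simp only [smul_smul] at h3
    have h4 : τ / M i * (M i / τ) = 1 := by field_simp
    rw [h4, one_smul] at h3
    linear_combination (norm := module) h3
  set w : V → ℝ := fun j =>
    if j = i then 1 - ∑ k ∈ univ.erase i, 4 * τ * dL i k / M i
    else 4 * τ * dL i j / M i with hwdef
  have hT : ∑ k ∈ univ.erase i, 4 * τ * dL i k / M i = 4 * τ * sig / M i := by
    rw [← Finset.sum_div, ← Finset.mul_sum, hsig]
  have hw_nonneg : ∀ j ∈ (univ : Finset V), 0 ≤ w j := by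
    intro j _
    simp only [hwdef]
    by_cases hji : j = i
    · rw [if_pos hji, hT]
      have hneg : 4 * τ * (-sig) / M i = -(4 * τ * sig / M i) := by ring
      rw [hneg] at hCFL
      linarith
    · rw [if_neg hji]
      have hd0 := hdpos i j (fun h => hji h.symm)
      exact div_nonneg (by nlinarith) (hM i).le
  have hw_erase : ∀ j ∈ univ.erase i, w j = 4 * τ * dL i j / M i := by
    intro j hj
    simp only [hwdef]
    rw [if_neg (Finset.mem_erase.mp hj).1]
  have hw_sum : ∑ j, w j = 1 := by
    rw [← Finset.add_sum_erase univ w (mem_univ i)]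
    rw [Finset.sum_congr rfl hw_erase]
    simp [hwdef]
  have hQeq : ∑ j, w j • Ubar i j
      = (1 - 4 * τ * sig / M i) • U i + (4 * τ / M i) • B1 := by
    rw [← Finset.add_sum_erase univ _ (mem_univ i), hUbarDiag]
    congr 1
    · simp only [hwdef, if_pos rfl]
      rw [hT]
    · rw [hB1, Finset.smul_sum]
      refine Finset.sum_congr rfl fun j hj => ?_
      rw [hw_erase j hj, smul_smul]
      congr 1
      ring
  have hULfinal : UL i = (1/2 : ℝ) • (U i + (2 * τ) • S (U i))
      + (1/2 : ℝ) • (∑ j, w j • Ubar i j) := by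
    rw [hQeq, hUL]
    have hda : M i • S (U i) - A + D = M i • S (U i) + (D - A) := by abel
    rw [hda, hkey]
    match_scalars <;> field_simp <;> ring
  have hC := hΨ Ψmin
  have hPmem : U i + (2 * τ) • S (U i) ∈ {W | W ∈ B ∧ Ψmin ≤ Ψ W} := by
    refine ⟨hsrc, ?_⟩
    rw [hΨmin]
    exact min_le_left _ _
  have hbarmem : ∀ j ∈ (univ : Finset V), Ubar i j ∈ {W | W ∈ B ∧ Ψmin ≤ Ψ W} := by
    intro j _
    constructor
    · by_cases hji : j = i
      · rw [hji, hUbarDiag]; exact hU i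
      · exact hbar j (Finset.mem_erase.mpr ⟨hji, mem_univ j⟩)
    · calc Ψmin ≤ univ.inf' univ_nonempty (fun j => Ψ (Ubar i j)) := by
              rw [hΨmin]; exact min_le_right _ _
        _ ≤ Ψ (Ubar i j) := Finset.inf'_le _ (mem_univ j)
  have hQmem : (∑ j, w j • Ubar i j) ∈ {W | W ∈ B ∧ Ψmin ≤ Ψ W} :=
    hC.sum_mem hw_nonneg hw_sum hbarmem
  have hmem : UL i ∈ {W | W ∈ B ∧ Ψmin ≤ Ψ W} := by
    rw [hULfinal]
    exact hC hPmem hQmem (by norm_num) (by norm_num) (by norm_num)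
  exact ⟨hmem.1, hmem.2⟩
end

section
/- Computation of the limiter: let C ⊆ ℝ^m be convex; let Ψ_i, Ψ_j : C → ℝ be quasiconcave and continuous; let U_i^L, U_j^L ∈ C with Ψ_i(U_i^L) ≥ 0 and Ψ_j(U_j^L) ≥ 0; let P_ij, P_ji ∈ ℝ^m be such that U_i^L + ℓ P_ij ∈ C and U_j^L + ℓ P_ji ∈ C for all ℓ ∈ [0,1]. Define ℓ^i_j := 1 if Ψ_i(U_i^L + P_ij) ≥ 0, and ℓ^i_j := max{ℓ ∈ [0,1] : Ψ_i(U_i^L + ℓ P_ij) ≥ 0} otherwise; define ℓ^j_i analogously with Ψ_j, U_j^L, P_ji. Then: (i) Ψ_i(U_i^L + ℓ P_ij) ≥ 0 for every ℓ ∈ [0, ℓ^i_j]; (ii) setting ℓ_ij := min(ℓ^i_j, ℓ^j_i), one has Ψ_i(U_i^L + ℓ_ij P_ij) ≥ 0, Ψ_j(U_j^L + ℓ_ij P_ji) ≥ 0, and ℓ_ij = ℓ_ji. -/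
open Finset Set

lemma limiter_aux
    (m : ℕ) (C : Set (Fin m → ℝ))
    (Ψ : (Fin m → ℝ) → ℝ)
    (hqc : Convex ℝ {W | W ∈ C ∧ (0:ℝ) ≤ Ψ W})
    (UL : Fin m → ℝ) (hUL : UL ∈ C) (hΨL : 0 ≤ Ψ UL)
    (P : Fin m → ℝ)
    (hseg : ∀ l ∈ Icc (0:ℝ) 1, UL + l • P ∈ C)
    (l₀ : ℝ) (hl₀ : l₀ ∈ Icc (0:ℝ) 1) (h0 : 0 ≤ Ψ (UL + l₀ • P)) :
    ∀ l ∈ Icc (0:ℝ) l₀, 0 ≤ Ψ (UL + l • P) := by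
  intro l hl
  rcases eq_or_lt_of_le hl₀.1 with h | hpos
  · have hl0 : l = 0 := le_antisymm (hl.2.trans h.symm.le) hl.1
    simpa [hl0] using hΨL
  · have hb : 0 ≤ l / l₀ := div_nonneg hl.1 hpos.le
    have hb1 : l / l₀ ≤ 1 := (div_le_one hpos).mpr hl.2
    have ha : 0 ≤ 1 - l / l₀ := by linarith
    have h1 : UL ∈ {W | W ∈ C ∧ (0:ℝ) ≤ Ψ W} := ⟨hUL, hΨL⟩
    have h2 : UL + l₀ • P ∈ {W | W ∈ C ∧ (0:ℝ) ≤ Ψ W} := ⟨hseg l₀ hl₀, h0⟩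
    have := hqc h1 h2 ha hb (by ring)
    have heq : (1 - l / l₀) • UL + (l / l₀) • (UL + l₀ • P) = UL + l • P := by
      rw [smul_add, smul_smul, div_mul_cancel₀ _ hpos.ne']
      module
    rw [heq] at this
    exact this.2

/-- Computation of the limiter `ℓ_ij = min(ℓ^i_j, ℓ^j_i)`. -/
theorem compute_limiter
    (m : ℕ) (C : Set (Fin m → ℝ)) (hC : Convex ℝ C)
    (Ψi Ψj : (Fin m → ℝ) → ℝ)
    (hΨiqc : ∀ χ : ℝ, Convex ℝ {W | W ∈ C ∧ χ ≤ Ψi W})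
    (hΨjqc : ∀ χ : ℝ, Convex ℝ {W | W ∈ C ∧ χ ≤ Ψj W})
    (hΨicont : ContinuousOn Ψi C) (hΨjcont : ContinuousOn Ψj C)
    (ULi ULj : Fin m → ℝ) (hULi : ULi ∈ C) (hULj : ULj ∈ C)
    (hΨiL : 0 ≤ Ψi ULi) (hΨjL : 0 ≤ Ψj ULj)
    (Pij Pji : Fin m → ℝ)
    (hsegi : ∀ l ∈ Icc (0:ℝ) 1, ULi + l • Pij ∈ C)
    (hsegj : ∀ l ∈ Icc (0:ℝ) 1, ULj + l • Pji ∈ C)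
    (lij lji : ℝ)
    (hlij : (0 ≤ Ψi (ULi + Pij) ∧ lij = 1)
      ∨ (¬ 0 ≤ Ψi (ULi + Pij)
          ∧ IsGreatest {l | l ∈ Icc (0:ℝ) 1 ∧ 0 ≤ Ψi (ULi + l • Pij)} lij))
    (hlji : (0 ≤ Ψj (ULj + Pji) ∧ lji = 1)
      ∨ (¬ 0 ≤ Ψj (ULj + Pji)
          ∧ IsGreatest {l | l ∈ Icc (0:ℝ) 1 ∧ 0 ≤ Ψj (ULj + l • Pji)} lji)) :
    (∀ l ∈ Icc (0:ℝ) lij, 0 ≤ Ψi (ULi + l • Pij))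
    ∧ (0 ≤ Ψi (ULi + min lij lji • Pij)
        ∧ 0 ≤ Ψj (ULj + min lij lji • Pji)
        ∧ min lij lji = min lji lij) := by
  have hi : lij ∈ Icc (0:ℝ) 1 ∧ 0 ≤ Ψi (ULi + lij • Pij) := by
    rcases hlij with ⟨h, rfl⟩ | ⟨_, hg⟩
    · exact ⟨⟨zero_le_one, le_refl 1⟩, by simpa using h⟩
    · exact hg.1
  have hj : lji ∈ Icc (0:ℝ) 1 ∧ 0 ≤ Ψj (ULj + lji • Pji) := by
    rcases hlji with ⟨h, rfl⟩ | ⟨_, hg⟩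
    · exact ⟨⟨zero_le_one, le_refl 1⟩, by simpa using h⟩
    · exact hg.1
  have Hi := limiter_aux m C Ψi (hΨiqc 0) ULi hULi hΨiL Pij hsegi lij hi.1 hi.2
  have Hj := limiter_aux m C Ψj (hΨjqc 0) ULj hULj hΨjL Pji hsegj lji hj.1 hj.2
  refine ⟨Hi, ?_, ?_, min_comm _ _⟩
  · exact Hi _ ⟨le_min hi.1.1 hj.1.1, min_le_left _ _⟩
  · exact Hj _ ⟨le_min hi.1.1 hj.1.1, min_le_right _ _⟩
end

section
/- Convex limiting produces an invariant domain: let L be a nonempty finite set and for each l ∈ L let Ψ^l : ℝ^m → ℝ be quasiconcave and continuous; set B := {U ∈ ℝ^m : Ψ^l(U) ≥ 0 for all l ∈ L}. In the abstract scheme setting, assume for all i ∈ V: (a) U_i^n ∈ B; (b) Ū_ij ∈ B for all j ≠ i; (c) U_i^n + 2τ S(U_i^n) ∈ B; (d) 1 + 4τ d_ii/m_i ≥ 0. Let A_ij ∈ ℝ^m be skew-symmetric (A_ij = −A_ji), let (λ_j)_{j≠i} be positive reals with ∑_{j≠i} λ_j = 1, and set P_ij := A_ij/(m_i λ_j). For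 each l ∈ L set Ψ_i^{l,min} := min( Ψ^l(U_i^n + 2τ S(U_i^n)), min_{j∈V} Ψ^l(Ū_ij) ) and Ψ_i^l := Ψ^l − Ψ_i^{l,min}; define ℓ_j^{i,l} := 1 if Ψ_i^l(U_i^{L,n+1} + P_ij) ≥ 0 and ℓ_j^{i,l} := max{ℓ ∈ [0,1] : Ψ_i^l(U_i^{L,n+1} + ℓ P_ij) ≥ 0} otherwise; set ℓ_ij := min( min_{l∈L} ℓ_j^{i,l}, min_{l∈L} ℓ_i^{j,l} ) and U_i^{n+1} := ∑_{j≠i} λ_j ( U_i^{L,n+1} + ℓ_ij P_ij ). Then U_i^{n+1} ∈ B for every i ∈ V. -/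
open Finset

lemma seg_mem {n : ℕ} {C : Set (Fin n → ℝ)} (hC : Convex ℝ C) {a p : Fin n → ℝ}
    {e x : ℝ} (ha : a ∈ C) (hb : a + e • p ∈ C) (hx : 0 ≤ x) (hxe : x ≤ e) :
    a + x • p ∈ C := by
  rcases eq_or_lt_of_le (hx.trans hxe) with he | he
  · have hx0 : x = 0 := le_antisymm (he ▸ hxe) hx
    simpa [hx0] using ha
  · have ht0 : 0 ≤ x / e := div_nonneg hx he.le
    have ht1 : 0 ≤ 1 - x / e := by
      have := (div_le_one he).2 hxe; linarith
    have hmem := hC ha hb ht1 ht0 (by ring)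
    have hrw : (1 - x / e) • a + (x / e) • (a + e • p) = a + ((x / e) * e) • p := by
      module
    rw [hrw, div_mul_cancel₀ _ he.ne'] at hmem
    exact hmem

/-- Convex limiting produces an invariant domain
`B = {U : Ψ^l(U) ≥ 0 for all l}`. -/
theorem convex_limiting_invariant_domain
    (m d : ℕ) (hm : 1 ≤ m) (hd : 1 ≤ d)
    (V : Type) [Fintype V] [DecidableEq V] [Nonempty V]
    (M : V → ℝ) (hM : ∀ i, 0 < M i)
    (c : V → V → Fin d → ℝ)
    (hcskew : ∀ i j, c i j = - c j i)
    (hcsum : ∀ i, ∑ j, c i j = 0)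
    (f : (Fin m → ℝ) → Matrix (Fin m) (Fin d) ℝ)
    (S : (Fin m → ℝ) → (Fin m → ℝ))
    (dL : V → V → ℝ)
    (hdsym : ∀ i j, i ≠ j → dL i j = dL j i)
    (hdpos : ∀ i j, i ≠ j → 0 < dL i j)
    (U UL : V → Fin m → ℝ)
    (τ : ℝ) (hτ : 0 < τ)
    (hscheme : ∀ i, (M i / τ) • (UL i - U i) + ∑ j, (f (U j)).mulVec (c i j)
        - ∑ j ∈ univ.erase i, dL i j • (U j - U i) = M i • S (U i))
    (Ubar : V → V → Fin m → ℝ)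
    (hUbar : ∀ i j, i ≠ j → Ubar i j = (1/2 : ℝ) • (U i + U j)
        - (1 / (2 * dL i j)) • ((f (U j) - f (U i)).mulVec (c i j)))
    (hUbarDiag : ∀ i, Ubar i i = U i)
    -- the family of quasiconcave continuous functionals and the set B
    (ι : Type) [Fintype ι] [Nonempty ι]
    (Ψ : ι → (Fin m → ℝ) → ℝ)
    (hΨqc : ∀ l, ∀ χ : ℝ, Convex ℝ {W | χ ≤ Ψ l W})
    (hΨcont : ∀ l, Continuous (Ψ l))
    (B : Set (Fin m → ℝ))
    (hBdef : B = {W | ∀ l, 0 ≤ Ψ l W})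
    -- invariance hypotheses (a)-(d)
    (hU : ∀ i, U i ∈ B)
    (hbar : ∀ i, ∀ j ∈ univ.erase i, Ubar i j ∈ B)
    (hsrc : ∀ i, U i + (2 * τ) • S (U i) ∈ B)
    (hCFL : ∀ i, 0 ≤ 1 + 4 * τ * (-(∑ j ∈ univ.erase i, dL i j)) / M i)
    -- skew-symmetric fluxes, convex coefficients, and limiting directions
    (A : V → V → Fin m → ℝ)
    (hAskew : ∀ i j, i ≠ j → A i j = - A j i)
    (lam : V → V → ℝ)
    (hlampos : ∀ i, ∀ j ∈ univ.erase i, 0 < lam i j)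
    (hlamsum : ∀ i, ∑ j ∈ univ.erase i, lam i j = 1)
    (P : V → V → Fin m → ℝ)
    (hP : ∀ i j, i ≠ j → P i j = (M i * lam i j)⁻¹ • A i j)
    -- the bounds and the limiters
    (Ψmin : V → ι → ℝ)
    (hΨmin : ∀ i l, Ψmin i l = min (Ψ l (U i + (2 * τ) • S (U i)))
        (univ.inf' univ_nonempty (fun j => Ψ l (Ubar i j))))
    (ell : V → V → ι → ℝ)
    (hell : ∀ i, ∀ j ∈ univ.erase i, ∀ l,
        (0 ≤ Ψ l (UL i + P i j) - Ψmin i l ∧ ell i j l = 1)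
      ∨ (¬ 0 ≤ Ψ l (UL i + P i j) - Ψmin i l
          ∧ IsGreatest {x | x ∈ Set.Icc (0:ℝ) 1
              ∧ 0 ≤ Ψ l (UL i + x • P i j) - Ψmin i l} (ell i j l)))
    (lij : V → V → ℝ)
    (hlij : ∀ i j, i ≠ j → lij i j =
        min (univ.inf' univ_nonempty (fun l => ell i j l))
            (univ.inf' univ_nonempty (fun l => ell j i l)))
    -- the limited update
    (Unew : V → Fin m → ℝ)
    (hUnew : ∀ i, Unew i = ∑ j ∈ univ.erase i, lam i j • (UL i + lij i j • P i j)) :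
    ∀ i, Unew i ∈ B := by
  classical
  subst hBdef
  have hMne : ∀ i, (M i : ℝ) ≠ 0 := fun i => (hM i).ne'
  have hτne : τ ≠ 0 := hτ.ne'
  -- Ψmin is nonnegative
  have hΨmin_nonneg : ∀ i l, 0 ≤ Ψmin i l := by
    intro i l
    rw [hΨmin]
    refine le_min (hsrc i l) (Finset.le_inf' _ _ ?_)
    intro j _
    rcases eq_or_ne j i with rfl | hji
    · rw [hUbarDiag]; exact hU j l
    · exact hbar i j (mem_erase.mpr ⟨hji, mem_univ j⟩) l
  -- representation of the low-order update
  have hULrep : ∀ i, UL i = U i + τ • S (U i)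
      + (2 * τ / M i) • (∑ j ∈ univ.erase i, dL i j • Ubar i j
          - (∑ j ∈ univ.erase i, dL i j) • U i) := by
    intro i
    have hzero : ∑ j, (f (U i)).mulVec (c i j) = 0 := by
      have h1 : (f (U i)).mulVecLin (∑ j, c i j) = ∑ j, (f (U i)).mulVecLin (c i j) :=
        map_sum _ _ _
      simp only [Matrix.mulVecLin_apply] at h1
      rw [← h1, hcsum i, Matrix.mulVec_zero]
    have hterm : ∀ j ∈ univ.erase i,
        (f (U j) - f (U i)).mulVec (c i j)
          = dL i j • U i + dL i j • U j - (2:ℝ) • (dL i j • Ubar i j) := by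
      intro j hj
      have hij : i ≠ j := ((mem_erase.mp hj).1).symm
      have hd : (0:ℝ) < dL i j := hdpos i j hij
      have h2 : (1 / (2 * dL i j)) • ((f (U j) - f (U i)).mulVec (c i j))
          = (1/2 : ℝ) • (U i + U j) - Ubar i j := by
        rw [hUbar i j hij]; module
      have h3 : ((2 * dL i j)) • ((1 / (2 * dL i j)) • ((f (U j) - f (U i)).mulVec (c i j)))
          = (f (U j) - f (U i)).mulVec (c i j) := by
        rw [smul_smul, mul_one_div, div_self (by positivity : (2 * dL i j) ≠ 0), one_smul]
      rw [← h3, h2]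
      module
    have hfs : ∑ j, (f (U j)).mulVec (c i j)
        = (∑ j ∈ univ.erase i, dL i j) • U i + (∑ j ∈ univ.erase i, dL i j • U j)
          - (2:ℝ) • (∑ j ∈ univ.erase i, dL i j • Ubar i j) := by
      have h4 : ∑ j, (f (U j)).mulVec (c i j)
          = ∑ j, (f (U j) - f (U i)).mulVec (c i j) := by
        simp only [Matrix.sub_mulVec]
        rw [Finset.sum_sub_distrib, hzero, sub_zero]
      have h5 : ∑ j, (f (U j) - f (U i)).mulVec (c i j)
          = ∑ j ∈ univ.erase i, (f (U j) - f (U i)).mulVec (c i j) := by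
        rw [← Finset.add_sum_erase (univ : Finset V) _ (mem_univ i)]
        simp
      rw [h4, h5, Finset.sum_congr rfl hterm, Finset.sum_sub_distrib,
        Finset.sum_add_distrib, ← Finset.sum_smul, ← Finset.smul_sum]
    have h6 := hscheme i
    have h7 : (M i / τ) • (UL i - U i)
        = M i • S (U i) - (∑ j, (f (U j)).mulVec (c i j))
          + ∑ j ∈ univ.erase i, dL i j • (U j - U i) := by
      rw [← h6]; abel
    have h8 : ∑ j ∈ univ.erase i, dL i j • (U j - U i)
        = (∑ j ∈ univ.erase i, dL i j • U j) - (∑ j ∈ univ.erase i, dL i j) • U i := by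
      simp only [smul_sub]
      rw [Finset.sum_sub_distrib, ← Finset.sum_smul]
    rw [hfs, h8] at h7
    have h9 : (M i / τ) • (UL i - U i)
        = M i • S (U i) + (2:ℝ) • ((∑ j ∈ univ.erase i, dL i j • Ubar i j)
            - (∑ j ∈ univ.erase i, dL i j) • U i) := by
      rw [h7]; module
    have hcancel : (τ / M i) * (M i / τ) = 1 := by
      rw [div_mul_div_comm, mul_comm]
      exact div_self (mul_ne_zero (hMne i) hτne)
    have h10 : UL i - U i = (τ / M i) • (M i • S (U i)
        + (2:ℝ) • ((∑ j ∈ univ.erase i, dL i j • Ubar i j)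
            - (∑ j ∈ univ.erase i, dL i j) • U i)) := by
      calc UL i - U i = ((τ / M i) * (M i / τ)) • (UL i - U i) := by
            rw [hcancel, one_smul]
        _ = (τ / M i) • ((M i / τ) • (UL i - U i)) := by rw [smul_smul]
        _ = _ := by rw [h9]
    have e1 : (τ / M i) • (M i • S (U i)) = τ • S (U i) := by
      rw [smul_smul, div_mul_cancel₀ _ (hMne i)]
    have e2 : (τ / M i) • ((2:ℝ) • ((∑ j ∈ univ.erase i, dL i j • Ubar i j)
            - (∑ j ∈ univ.erase i, dL i j) • U i))
        = (2 * τ / M i) • ((∑ j ∈ univ.erase i, dL i j • Ubar i j)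
            - (∑ j ∈ univ.erase i, dL i j) • U i) := by
      rw [smul_smul]; congr 1; ring
    have h11 : UL i = U i + (τ / M i) • (M i • S (U i)
        + (2:ℝ) • ((∑ j ∈ univ.erase i, dL i j • Ubar i j)
            - (∑ j ∈ univ.erase i, dL i j) • U i)) := by
      rw [← h10]; abel
    rw [h11, smul_add, e1, e2]; abel
  -- the low-order update satisfies the local bounds
  have hULmem : ∀ i l, Ψmin i l ≤ Ψ l (UL i) := by
    intro i l
    have hC : Convex ℝ {W : Fin m → ℝ | Ψmin i l ≤ Ψ l W} := hΨqc l (Ψmin i l)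
    set w' : V → ℝ := fun j =>
      if j = i then 1 + 4 * τ * (-(∑ k ∈ univ.erase i, dL i k)) / M i
      else 4 * τ * dL i j / M i with hw'
    have hw'0 : ∀ j ∈ (univ : Finset V), 0 ≤ w' j := by
      intro j _
      simp only [hw']
      split_ifs with h
      · exact hCFL i
      · exact div_nonneg (mul_nonneg (by linarith) (hdpos i j (Ne.symm h)).le) (hM i).le
    have hw'1 : ∑ j, w' j = 1 := by
      simp only [hw']
      rw [← Finset.add_sum_erase (univ : Finset V) _ (mem_univ i), if_pos rfl,
        Finset.sum_congr rfl (fun j hj => if_neg (mem_erase.mp hj).1),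
        ← Finset.sum_div, ← Finset.mul_sum]
      field_simp
      ring
    have hpt : ∀ j ∈ (univ : Finset V), Ubar i j ∈ {W : Fin m → ℝ | Ψmin i l ≤ Ψ l W} := by
      intro j _
      show Ψmin i l ≤ Ψ l (Ubar i j)
      rw [hΨmin]
      exact le_trans (min_le_right _ _) (Finset.inf'_le _ (mem_univ j))
    have hQmem : (∑ j, w' j • Ubar i j) ∈ {W : Fin m → ℝ | Ψmin i l ≤ Ψ l W} :=
      hC.sum_mem hw'0 hw'1 hpt
    have hp0 : (U i + (2 * τ) • S (U i)) ∈ {W : Fin m → ℝ | Ψmin i l ≤ Ψ l W} := by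
      show Ψmin i l ≤ Ψ l (U i + (2 * τ) • S (U i))
      rw [hΨmin]
      exact min_le_left _ _
    have hsplit : ∑ j, w' j • Ubar i j
        = (1 + 4 * τ * (-(∑ k ∈ univ.erase i, dL i k)) / M i) • U i
          + (4 * τ / M i) • (∑ j ∈ univ.erase i, dL i j • Ubar i j) := by
      simp only [hw']
      have hcong : ∀ j ∈ univ.erase i,
          (if j = i then 1 + 4 * τ * (-(∑ k ∈ univ.erase i, dL i k)) / M i
            else 4 * τ * dL i j / M i) • Ubar i j
          = (4 * τ / M i) • (dL i j • Ubar i j) := by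
        intro j hj
        rw [if_neg (mem_erase.mp hj).1, smul_smul]
        congr 1; ring
      rw [← Finset.add_sum_erase (univ : Finset V) _ (mem_univ i), if_pos rfl, hUbarDiag i,
        Finset.sum_congr rfl hcong, ← Finset.smul_sum]
    have hkey : UL i = (1/2 : ℝ) • (U i + (2 * τ) • S (U i))
        + (1/2 : ℝ) • (∑ j, w' j • Ubar i j) := by
      rw [hULrep i, hsplit]
      have hmul : 4 * τ * (-(∑ k ∈ univ.erase i, dL i k)) / M i
          = -(4 * τ / M i * (∑ k ∈ univ.erase i, dL i k)) := by ring
      rw [hmul]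
      module
    have hmem := hC hp0 hQmem (by norm_num) (by norm_num) (by norm_num : (1/2:ℝ) + 1/2 = 1)
    rw [hkey]
    exact hmem
  -- nonnegativity and bounds for the limiters
  have hell_nonneg : ∀ a b, b ∈ univ.erase a → ∀ l', 0 ≤ ell a b l' := by
    intro a b hb l'
    rcases hell a b hb l' with ⟨_, h1⟩ | ⟨_, hgr⟩
    · rw [h1]; norm_num
    · exact hgr.1.1.1
  -- the main statement
  intro i
  intro l
  have hC0 : Convex ℝ {W : Fin m → ℝ | (0:ℝ) ≤ Ψ l W} := hΨqc l 0
  have key : ∀ j ∈ univ.erase i, (UL i + lij i j • P i j) ∈ {W : Fin m → ℝ | (0:ℝ) ≤ Ψ l W} := by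
    intro j hj
    have hji : j ≠ i := (mem_erase.mp hj).1
    have hC1 : Convex ℝ {W : Fin m → ℝ | Ψmin i l ≤ Ψ l W} := hΨqc l (Ψmin i l)
    have hmem1 : UL i ∈ {W : Fin m → ℝ | Ψmin i l ≤ Ψ l W} := hULmem i l
    have hlle : lij i j ≤ ell i j l := by
      rw [hlij i j hji.symm]
      exact le_trans (min_le_left _ _) (Finset.inf'_le _ (mem_univ l))
    have hlnn : 0 ≤ lij i j := by
      rw [hlij i j hji.symm]
      refine le_min (Finset.le_inf' _ _ ?_) (Finset.le_inf' _ _ ?_)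
      · intro l' _; exact hell_nonneg i j hj l'
      · intro l' _
        exact hell_nonneg j i (mem_erase.mpr ⟨hji.symm, mem_univ i⟩) l'
    have hseg : UL i + lij i j • P i j ∈ {W : Fin m → ℝ | Ψmin i l ≤ Ψ l W} := by
      rcases hell i j hj l with ⟨hge, he1⟩ | ⟨hlt, hgr⟩
      · have hb : UL i + (1:ℝ) • P i j ∈ {W : Fin m → ℝ | Ψmin i l ≤ Ψ l W} := by
          rw [one_smul]
          exact sub_nonneg.mp hge
        exact seg_mem hC1 hmem1 hb hlnn (he1 ▸ hlle)
      · have hb : UL i + ell i j l • P i j ∈ {W : Fin m → ℝ | Ψmin i l ≤ Ψ l W} :=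
          sub_nonneg.mp hgr.1.2
        exact seg_mem hC1 hmem1 hb hlnn hlle
    exact le_trans (hΨmin_nonneg i l) hseg
  have hfin := hC0.sum_mem (fun j hj => (hlampos i j hj).le) (hlamsum i) key
  rw [hUnew i]
  exact hfin
end

section
/- From quasiconcave to concave constraints: let B ⊆ ℝ^m be convex, Ψ : B → ℝ, R : B → ℝ with R(U) > 0 for all U ∈ B, and assume Φ := R·Ψ is concave on B. Let U^L ∈ B with Ψ(U^L) ≥ 0, let P ∈ ℝ^m and ℓ^max ∈ [0,1] be such that U^L + ℓP ∈ B for all ℓ ∈ [0, ℓ^max], and let Ψ^min ∈ ℝ. Assume either (i) R is the restriction to B of an affine function on ℝ^m, or (ii) Ψ^min ≥ 0 and R is convex on B. Then: (1) for every ℓ ∈ [0, ℓ^max], Ψ(U^L + ℓP) − Ψ^min ≥ 0 if and only if Φ(U^L + ℓP) − Ψ^min R(U^L + ℓP) ≥ 0; and (2) the map ℓ ↦ Φ(U^L + ℓP) − Ψ^min R(U^L + ℓP) is concave on [0, ℓ^max]. -/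
open Set

lemma line_combo (m : ℕ) (UL P : Fin m → ℝ) (x y a b : ℝ) (hab : a + b = 1) :
    UL + (a • x + b • y) • P = a • (UL + x • P) + b • (UL + y • P) := by
  have hb : b = 1 - a := by linarith
  subst hb
  simp only [smul_eq_mul]
  module

/-- transforming a quasiconcave constraint into a concave constraint:
with `Φ := R·Ψ` concave and `R > 0` on the convex set `B`, the constraint
`Ψ − Ψ^min ≥ 0` is equivalent along the segment to `Φ − Ψ^min R ≥ 0`, and the
latter is concave in the line-search parameter. -/
theorem quasiconcave_to_concave_constraint
    (m : ℕ) (B : Set (Fin m → ℝ)) (hB : Convex ℝ B)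
    (Ψ R : (Fin m → ℝ) → ℝ)
    (hRpos : ∀ U ∈ B, 0 < R U)
    (hconc : ConcaveOn ℝ B (fun U => R U * Ψ U))
    (UL : Fin m → ℝ) (hUL : UL ∈ B) (hΨUL : 0 ≤ Ψ UL)
    (P : Fin m → ℝ)
    (lmax : ℝ) (hlmax : lmax ∈ Icc (0:ℝ) 1)
    (hseg : ∀ l ∈ Icc (0:ℝ) lmax, UL + l • P ∈ B)
    (Ψmin : ℝ)
    (hcase : (∃ A : (Fin m → ℝ) →ᵃ[ℝ] ℝ, ∀ U ∈ B, R U = A U)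
      ∨ (0 ≤ Ψmin ∧ ConvexOn ℝ B R)) :
    (∀ l ∈ Icc (0:ℝ) lmax,
        (0 ≤ Ψ (UL + l • P) - Ψmin ↔
          0 ≤ R (UL + l • P) * Ψ (UL + l • P) - Ψmin * R (UL + l • P)))
    ∧ ConcaveOn ℝ (Icc (0:ℝ) lmax)
        (fun l : ℝ => R (UL + l • P) * Ψ (UL + l • P) - Ψmin * R (UL + l • P)) := by
  constructor
  · intro l hl
    have hR := hRpos _ (hseg l hl)
    constructor
    · intro h
      have : R (UL + l • P) * Ψ (UL + l • P) - Ψmin * R (UL + l • P)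
          = R (UL + l • P) * (Ψ (UL + l • P) - Ψmin) := by ring
      rw [this]
      exact mul_nonneg hR.le h
    · intro h
      have h' : 0 ≤ R (UL + l • P) * (Ψ (UL + l • P) - Ψmin) := by nlinarith
      exact nonneg_of_mul_nonneg_right h' hR
  · -- concavity
    have hΦ : ConcaveOn ℝ (Icc (0:ℝ) lmax)
        (fun l : ℝ => R (UL + l • P) * Ψ (UL + l • P)) := by
      refine ⟨convex_Icc _ _, fun x hx y hy a b ha hb hab => ?_⟩
      have hx' := hseg x hx
      have hy' := hseg y hy
      have hmem : a • x + b • y ∈ Icc (0:ℝ) lmax :=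
        (convex_Icc (0:ℝ) lmax) hx hy ha hb hab
      have key := line_combo m UL P x y a b hab
      calc a • (R (UL + x • P) * Ψ (UL + x • P)) + b • (R (UL + y • P) * Ψ (UL + y • P))
          ≤ R (a • (UL + x • P) + b • (UL + y • P)) * Ψ (a • (UL + x • P) + b • (UL + y • P)) :=
            hconc.2 hx' hy' ha hb hab
        _ = R (UL + (a • x + b • y) • P) * Ψ (UL + (a • x + b • y) • P) := by rw [key]
    have hR2 : ConvexOn ℝ (Icc (0:ℝ) lmax) (fun l : ℝ => Ψmin * R (UL + l • P)) := by
      rcases hcase with ⟨A, hA⟩ | ⟨hΨm, hRconv⟩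
      · refine ⟨convex_Icc _ _, fun x hx y hy a b ha hb hab => ?_⟩
        have hx' := hseg x hx
        have hy' := hseg y hy
        have hmem : a • x + b • y ∈ Icc (0:ℝ) lmax :=
          (convex_Icc (0:ℝ) lmax) hx hy ha hb hab
        have key := line_combo m UL P x y a b hab
        dsimp only
        rw [hA _ (hseg _ hmem), hA _ hx', hA _ hy', key,
          Convex.combo_affine_apply hab]
        simp only [smul_eq_mul]
        ring_nf
        exact le_refl _
      · refine ⟨convex_Icc _ _, fun x hx y hy a b ha hb hab => ?_⟩
        have hx' := hseg x hx
        have hy' := hseg y hy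
        have key := line_combo m UL P x y a b hab
        have := hRconv.2 hx' hy' ha hb hab
        rw [← key] at this
        have := mul_le_mul_of_nonneg_left this hΨm
        simp only [smul_eq_mul] at *
        nlinarith
    exact hΦ.sub hR2
end

section
/- Newton–secant ordering: let ℓ_l < ℓ_r be reals and let g : [ℓ_l, ℓ_r] → ℝ be twice continuously differentiable with g''(ℓ) < 0 for all ℓ ∈ [ℓ_l, ℓ_r], g(ℓ_l) > 0 and g(ℓ_r) < 0. Then: (i) the secant slope s_l := (g(ℓ_r) − g(ℓ_l))/(ℓ_r − ℓ_l) and the derivative s_r := g'(ℓ_r) are both negative; (ii) there is a unique ℓ* ∈ (ℓ_l, ℓ_r) with g(ℓ*) = 0, and the updates ℓ_l' := ℓ_l − g(ℓ_l)/s_l and ℓ_r' := ℓ_r − g(ℓ_r)/s_r satisfy ℓ_l < ℓ_l' < ℓ* < ℓ_r' < ℓ_r. -/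
open Set

/-- One iteration of the Newton–secant method: under strict
concavity (`g'' < 0`) with `g(ℓ_l) > 0 > g(ℓ_r)`, the secant slope and `g'(ℓ_r)`
are negative, there is a unique root `ℓ* ∈ (ℓ_l, ℓ_r)`, and the secant update from
the left and Newton update from the right bracket it strictly:
`ℓ_l < ℓ_l' < ℓ* < ℓ_r' < ℓ_r`. -/
theorem newton_secant_ordering
    (ll lr : ℝ) (hllr : ll < lr)
    (g g' g'' : ℝ → ℝ)
    (hg' : ∀ x ∈ Icc ll lr, HasDerivWithinAt g (g' x) (Icc ll lr) x)
    (hg'' : ∀ x ∈ Icc ll lr, HasDerivWithinAt g' (g'' x) (Icc ll lr) x)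
    (hg''cont : ContinuousOn g'' (Icc ll lr))
    (hconc : ∀ x ∈ Icc ll lr, g'' x < 0)
    (hgl : 0 < g ll) (hgr : g lr < 0) :
    (g lr - g ll) / (lr - ll) < 0 ∧ g' lr < 0 ∧
    ∃ lstar ∈ Ioo ll lr, g lstar = 0
      ∧ (∀ y ∈ Ioo ll lr, g y = 0 → y = lstar)
      ∧ ll < ll - g ll / ((g lr - g ll) / (lr - ll))
      ∧ ll - g ll / ((g lr - g ll) / (lr - ll)) < lstar
      ∧ lstar < lr - g lr / g' lr
      ∧ lr - g lr / g' lr < lr := by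
  have hgc : ContinuousOn g (Icc ll lr) := fun x hx => (hg' x hx).continuousWithinAt
  have hg'c : ContinuousOn g' (Icc ll lr) := fun x hx => (hg'' x hx).continuousWithinAt
  have hder : ∀ x ∈ Ioo ll lr, HasDerivAt g (g' x) x := by
    intro x hx
    exact (hg' x (Ioo_subset_Icc_self hx)).hasDerivAt (Icc_mem_nhds hx.1 hx.2)
  have hanti : StrictAntiOn g' (Icc ll lr) := by
    apply strictAntiOn_of_deriv_neg (convex_Icc ll lr) hg'c
    intro x hx
    rw [interior_Icc] at hx
    have hx' : x ∈ Icc ll lr := Ioo_subset_Icc_self hx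
    have := (hg'' x hx').hasDerivAt (Icc_mem_nhds hx.1 hx.2)
    rw [this.deriv]
    exact hconc x hx'
  -- Mean value theorem on subintervals
  have mvt : ∀ a b : ℝ, ll ≤ a → a < b → b ≤ lr →
      ∃ c ∈ Ioo a b, g' c = (g b - g a) / (b - a) := by
    intro a b ha hab hb
    exact exists_hasDerivAt_eq_slope g g' hab
      (hgc.mono (Icc_subset_Icc ha hb))
      (fun x hx => hder x ⟨lt_of_le_of_lt ha hx.1, lt_of_lt_of_le hx.2 hb⟩)
  set s : ℝ := (g lr - g ll) / (lr - ll) with hs_def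
  have hlr0 : (0:ℝ) < lr - ll := by linarith
  have hs0 : s < 0 := div_neg_of_neg_of_pos (by linarith) hlr0
  have hs_mul : s * (lr - ll) = g lr - g ll := by
    rw [hs_def]; exact div_mul_cancel₀ _ (ne_of_gt hlr0)
  -- g' lr < 0
  obtain ⟨c0, hc0, hc0eq⟩ := mvt ll lr le_rfl hllr le_rfl
  have hglr' : g' lr < 0 := by
    have h1 : g' lr < g' c0 :=
      hanti (Ioo_subset_Icc_self hc0) (right_mem_Icc.2 (le_of_lt hllr)) hc0.2
    have : g' c0 < 0 := by rw [hc0eq]; exact hs0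
    linarith
  -- root existence
  obtain ⟨lstar, hls_mem, hls0⟩ :=
    intermediate_value_Icc' (le_of_lt hllr) hgc ⟨le_of_lt hgr, le_of_lt hgl⟩
  have hls_ne_l : lstar ≠ ll := by intro h; rw [h] at hls0; linarith
  have hls_ne_r : lstar ≠ lr := by intro h; rw [h] at hls0; linarith
  have hlsIoo : lstar ∈ Ioo ll lr :=
    ⟨lt_of_le_of_ne hls_mem.1 (Ne.symm hls_ne_l), lt_of_le_of_ne hls_mem.2 hls_ne_r⟩
  -- sign claims
  have claimN : ∀ x, lstar < x → x ≤ lr → g x < 0 := by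
    intro x hx1 hx2
    by_contra hcon
    push_neg at hcon
    obtain ⟨c1, hc1, hc1eq⟩ := mvt ll lstar le_rfl hlsIoo.1 (le_of_lt (lt_of_lt_of_le hx1 hx2))
    obtain ⟨c2, hc2, hc2eq⟩ := mvt lstar x (le_of_lt hlsIoo.1) hx1 hx2
    have hcc : g' c2 < g' c1 := by
      have m1 : c1 ∈ Icc ll lr := ⟨le_of_lt hc1.1, by linarith [hc1.2, hls_mem.2]⟩
      have m2 : c2 ∈ Icc ll lr := ⟨by linarith [hc2.1, hls_mem.1], by linarith [hc2.2]⟩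
      exact hanti m1 m2 (lt_trans hc1.2 hc2.1)
    have h1 : g' c1 < 0 := by
      rw [hc1eq, hls0]
      apply div_neg_of_neg_of_pos (by linarith) (by linarith [hlsIoo.1])
    have h2 : 0 ≤ g' c2 := by
      rw [hc2eq, hls0]
      apply div_nonneg (by linarith) (by linarith)
    linarith
  have claimP : ∀ x, ll ≤ x → x < lstar → 0 < g x := by
    intro x hx1 hx2
    rcases eq_or_lt_of_le hx1 with h | h
    · rw [← h]; exact hgl
    by_contra hcon
    push_neg at hcon
    obtain ⟨c1, hc1, hc1eq⟩ := mvt ll x le_rfl h (le_of_lt (lt_of_lt_of_le hx2 hls_mem.2))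
    obtain ⟨c2, hc2, hc2eq⟩ := mvt x lstar hx1 hx2 hls_mem.2
    have hcc : g' c2 < g' c1 := by
      have m1 : c1 ∈ Icc ll lr := ⟨le_of_lt hc1.1, by linarith [hc1.2, hx2, hls_mem.2]⟩
      have m2 : c2 ∈ Icc ll lr := ⟨by linarith [hc2.1, hx1], by linarith [hc2.2, hls_mem.2]⟩
      exact hanti m1 m2 (by linarith [hc1.2, hc2.1])
    have h1 : g' c1 < 0 := by
      rw [hc1eq]
      apply div_neg_of_neg_of_pos (by linarith) (by linarith)
    have h2 : 0 ≤ g' c2 := by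
      rw [hc2eq, hls0]
      apply div_nonneg (by linarith) (by linarith)
    linarith
  -- uniqueness
  have huniq : ∀ y ∈ Ioo ll lr, g y = 0 → y = lstar := by
    intro y hy hy0
    rcases lt_trichotomy y lstar with h | h | h
    · exact absurd hy0 (ne_of_gt (claimP y (le_of_lt hy.1) h))
    · exact h
    · exact absurd hy0 (ne_of_lt (claimN y h (le_of_lt hy.2)))
  -- secant update
  set l1 : ℝ := ll - g ll / s with hl1_def
  have hl1_gt : ll < l1 := by
    have : g ll / s < 0 := div_neg_of_pos_of_neg hgl hs0
    simp only [hl1_def]; linarith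
  have hl1_mul : s * (l1 - ll) = - g ll := by
    have hs_ne : s ≠ 0 := ne_of_lt hs0
    have hc : g ll / s * s = g ll := div_mul_cancel₀ _ hs_ne
    rw [hl1_def]; linear_combination -hc
  have hl1_lt_lr : l1 < lr := by
    nlinarith [hl1_mul, hs_mul]
  have hgl1 : 0 < g l1 := by
    by_contra hcon
    push_neg at hcon
    obtain ⟨c1, hc1, hc1eq⟩ := mvt ll l1 le_rfl hl1_gt (le_of_lt hl1_lt_lr)
    obtain ⟨c2, hc2, hc2eq⟩ := mvt l1 lr (le_of_lt hl1_gt) hl1_lt_lr le_rfl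
    have hcc : g' c2 < g' c1 := by
      have m1 : c1 ∈ Icc ll lr := ⟨le_of_lt hc1.1, by linarith [hc1.2, hl1_lt_lr]⟩
      have m2 : c2 ∈ Icc ll lr := ⟨by linarith [hc2.1, hl1_gt], le_of_lt hc2.2⟩
      exact hanti m1 m2 (lt_trans hc1.2 hc2.1)
    have hu : (0:ℝ) < l1 - ll := by linarith
    have hv : (0:ℝ) < lr - l1 := by linarith
    have hsv : s * (lr - l1) = g lr := by linear_combination hs_mul - hl1_mul
    rw [hc1eq, hc2eq, div_lt_div_iff₀ hv hu] at hcc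
    have e1 : s * (lr - l1) * (l1 - ll) = g lr * (l1 - ll) := by rw [hsv]
    have e2 : s * (l1 - ll) * (lr - l1) = -g ll * (lr - l1) := by rw [hl1_mul]
    nlinarith [hcc, e1, e2, mul_nonpos_of_nonpos_of_nonneg hcon (le_of_lt hu),
      mul_nonpos_of_nonpos_of_nonneg hcon (le_of_lt hv)]
  have hl1_lt_star : l1 < lstar := by
    rcases lt_trichotomy l1 lstar with h | h | h
    · exact h
    · exfalso; rw [h] at hgl1; linarith [hls0, hgl1]
    · exact absurd (claimN l1 h (le_of_lt hl1_lt_lr)) (by linarith)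
  -- Newton update
  have hglr'_ne : g' lr ≠ 0 := ne_of_lt hglr'
  have hnewt_lt : lr - g lr / g' lr < lr := by
    have : 0 < g lr / g' lr := div_pos_of_neg_of_neg hgr hglr'
    linarith
  have hnewt_gt : lstar < lr - g lr / g' lr := by
    obtain ⟨c, hc, hceq⟩ := mvt lstar lr hls_mem.1 hlsIoo.2 le_rfl
    have hcc : g' lr < g' c :=
      hanti ⟨le_trans hls_mem.1 (le_of_lt hc.1), le_of_lt hc.2⟩
        (right_mem_Icc.2 (le_of_lt hllr)) hc.2
    have hdist : (0:ℝ) < lr - lstar := by linarith [hlsIoo.2]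
    have hkey : g' lr * (lr - lstar) < g lr := by
      have : g' c * (lr - lstar) = g lr := by
        rw [hceq, hls0]; field_simp; ring
      nlinarith
    have : g lr / g' lr < lr - lstar := by
      rw [div_lt_iff_of_neg hglr']
      nlinarith
    linarith
  exact ⟨hs0, hglr', lstar, hlsIoo, hls0, huniq, hl1_gt, hl1_lt_star, hnewt_gt, hnewt_lt⟩
end
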